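/- arXiv:1307.0230 — 4 statements merged into one kernel-verified Lean document; each statement's English description precedes it below -/
import Mathlib

section
/- Let (Ω, F, P) be a probability space, ℓ : [0, ∞) → [0, ∞) a loss function as specified, I := (ℓ')⁻¹, V : Ω → (0, ∞) measurable, and G : Ω → [0, ∞) measurable with P(G > 0) > 0, E[ℓ(G)] < ∞ and 0 < E[V G] < ∞. Fix y with 0 < y < E[V G]. For c > 0 define φ̂(c) := 1_{G>0}·(1 − min(I(cV)/G, 1)) and k(c) := E[V G φ̂(c)], and let ĉ > 0 be the unique positive solution of k(ĉ) = y (which exists). Then φ̂(ĉ) is optimal for the constrained expected-shortfall problem: E[V G φ̂(ĉ)] = y, and for every measurable φ : Ω → [0, 1] with E[V G φ] ≤ y one has E[ℓ((1 − φ̂(ĉ))G)] ≤ E[ℓ((1 − φ)G)]. -/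
open MeasureTheory Set Filter

private lemma subgrad_aux {ℓ ℓd : ℝ → ℝ}
    (hderiv : ∀ x ∈ Ici (0:ℝ), HasDerivWithinAt ℓ (ℓd x) (Ici 0) x)
    (hconv : ConvexOn ℝ (Ici 0) ℓ) {a b : ℝ} (ha : a ∈ Ici (0:ℝ)) (hb : b ∈ Ici (0:ℝ)) :
    ℓ a + ℓd a * (b - a) ≤ ℓ b := by
  rcases lt_trichotomy a b with h | rfl | h
  · have hs := hconv.le_slope_of_hasDerivWithinAt ha hb h (hderiv a ha)
    rw [slope_def_field] at hs
    have hba : 0 < b - a := sub_pos.2 h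
    have := (le_div_iff₀ hba).1 hs
    linarith
  · simp
  · have hs := hconv.slope_le_of_hasDerivWithinAt hb ha h (hderiv a ha)
    rw [slope_def_field] at hs
    have hab : 0 < a - b := sub_pos.2 h
    have h2 := (div_le_iff₀ hab).1 hs
    have h3 : ℓd a * (b - a) = -(ℓd a * (a - b)) := by ring
    linarith

/-- **Optimality of `φ̂(ĉ)` for the constrained expected-shortfall problem (static form).**
With `ℓ` a `C¹`, strictly convex, increasing loss function with `ℓ(0)=0`, `ℓ'(0⁺)=0`,
`ℓ'(∞)=∞`, `I = (ℓ')⁻¹`, `V > 0`, `G ≥ 0` with `P(G>0) > 0`, `E[ℓ(G)] < ∞`,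
`0 < y < E[VG]`, `φ̂(c) = 1_{G>0}(1 − min(I(cV)/G, 1))` and `k(c) = E[VG φ̂(c)]`:
there is a unique `ĉ > 0` with `k(ĉ) = y`, and for this `ĉ`, `φ̂(ĉ)` saturates the budget
(`E[VG φ̂(ĉ)] = y`) and minimizes `E[ℓ((1−φ)G)]` among all measurable `φ : Ω → [0,1]`
with `E[VGφ] ≤ y`. -/
theorem stmt_12
    {Ω : Type*} [MeasurableSpace Ω] (P : Measure Ω) [IsProbabilityMeasure P]
    (ℓ ℓd I : ℝ → ℝ)
    (hderiv : ∀ x ∈ Ici (0:ℝ), HasDerivWithinAt ℓ (ℓd x) (Ici 0) x)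
    (hdcont : ContinuousOn ℓd (Ici 0))
    (hsconv : StrictConvexOn ℝ (Ici 0) ℓ)
    (hincr : StrictMonoOn ℓ (Ici 0))
    (hzero : ℓ 0 = 0)
    (hd0 : Tendsto ℓd (nhdsWithin 0 (Ioi 0)) (nhds 0))
    (hdinf : Tendsto ℓd atTop atTop)
    (hI : ∀ y ∈ Ioi (0:ℝ), I y ∈ Ioi (0:ℝ) ∧ ℓd (I y) = y)
    (hI' : ∀ x ∈ Ioi (0:ℝ), I (ℓd x) = x)
    (V G : Ω → ℝ) (hVmeas : Measurable V) (hGmeas : Measurable G)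
    (hVpos : ∀ ω, 0 < V ω) (hGpos : ∀ ω, 0 ≤ G ω)
    (hGpos' : 0 < P {ω | 0 < G ω})
    (hℓG : Integrable (fun ω => ℓ (G ω)) P)
    (hVG : Integrable (fun ω => V ω * G ω) P)
    (hVGpos : 0 < ∫ ω, V ω * G ω ∂P)
    (y : ℝ) (hy : 0 < y) (hy' : y < ∫ ω, V ω * G ω ∂P)
    (φh : ℝ → Ω → ℝ)
    (hφh : ∀ c ω, φh c ω = if 0 < G ω then 1 - min (I (c * V ω) / G ω) 1 else 0)
    (k : ℝ → ℝ)
    (hk : ∀ c, k c = ∫ ω, V ω * G ω * φh c ω ∂P) :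
    (∃! c : ℝ, 0 < c ∧ k c = y) ∧
    ∀ c : ℝ, 0 < c → k c = y →
      (∫ ω, V ω * G ω * φh c ω ∂P) = y ∧
      ∀ φ : Ω → ℝ, Measurable φ → (∀ ω, φ ω ∈ Icc (0:ℝ) 1) →
        (∫ ω, V ω * G ω * φ ω ∂P) ≤ y →
        (∫ ω, ℓ ((1 - φh c ω) * G ω) ∂P) ≤ ∫ ω, ℓ ((1 - φ ω) * G ω) ∂P := by
  -- basic facts about ℓd and I
  have hd00 : ℓd 0 = 0 := by
    have h1 : Tendsto ℓd (nhdsWithin 0 (Ioi 0)) (nhds (ℓd 0)) :=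
      ((hdcont 0 Set.self_mem_Ici).tendsto).mono_left (nhdsWithin_mono 0 Ioi_subset_Ici_self)
    exact tendsto_nhds_unique h1 hd0
  have hdSM : StrictMonoOn ℓd (Ici 0) := fun a ha b hb hab =>
    (hsconv.lt_slope_of_hasDerivWithinAt ha hb hab (hderiv a ha)).trans
      (hsconv.slope_lt_of_hasDerivWithinAt ha hb hab (hderiv b hb))
  have hdpos : ∀ x : ℝ, 0 < x → 0 < ℓd x := by
    intro x hx
    have := hdSM (Set.mem_Ici.2 (le_refl 0)) (Set.mem_Ici.2 (le_of_lt hx)) hx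
    rwa [hd00] at this
  have hIpos : ∀ t : ℝ, 0 < t → 0 < I t := fun t ht => (hI t ht).1
  have hIval : ∀ t : ℝ, 0 < t → ℓd (I t) = t := fun t ht => (hI t ht).2
  have hIltIff : ∀ s t : ℝ, 0 < s → 0 < t → (I s < I t ↔ s < t) := by
    intro s t hs ht
    have h := hdSM.lt_iff_lt (le_of_lt (hIpos s hs)) (le_of_lt (hIpos t ht))
    rw [hIval s hs, hIval t ht] at h
    exact h.symm
  have hIlt : ∀ t x : ℝ, 0 < t → 0 < x → (I t < x ↔ t < ℓd x) := by
    intro t x ht hx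
    have h := hdSM.lt_iff_lt (le_of_lt (hIpos t ht)) (le_of_lt hx)
    rw [hIval t ht] at h
    exact h.symm
  have hltI : ∀ t x : ℝ, 0 < t → 0 < x → (x < I t ↔ ℓd x < t) := by
    intro t x ht hx
    have h := hdSM.lt_iff_lt (le_of_lt hx) (le_of_lt (hIpos t ht))
    rw [hIval t ht] at h
    exact h.symm
  -- the monotone extension of I
  set Ifun : ℝ → ℝ := fun x => if 0 < x then I x else 0 with hIfun_def
  have hIfunEq : ∀ x : ℝ, 0 < x → Ifun x = I x := by
    intro x hx; simp only [hIfun_def, if_pos hx]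
  have hIfunNonneg : ∀ x : ℝ, 0 ≤ Ifun x := by
    intro x
    by_cases hx : 0 < x
    · rw [hIfunEq x hx]; exact (hIpos x hx).le
    · simp only [hIfun_def, if_neg hx]; exact le_refl 0
  have hIfunMono : Monotone Ifun := by
    intro a b hab
    by_cases ha : 0 < a
    · have hb : 0 < b := lt_of_lt_of_le ha hab
      rw [hIfunEq a ha, hIfunEq b hb]
      rcases eq_or_lt_of_le hab with rfl | h
      · exact le_refl _
      · exact ((hIltIff a b ha hb).2 h).le
    · simp only [hIfun_def, if_neg ha]
      exact hIfunNonneg b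
  have hIfunMeas : Measurable Ifun := hIfunMono.measurable
  have hIfunCont : ∀ t : ℝ, 0 < t → ContinuousAt Ifun t := by
    intro t ht
    have : Tendsto Ifun (nhds t) (nhds (I t)) := by
      rw [tendsto_order]
      constructor
      · intro a ha
        rcases lt_or_ge a 0 with ha0 | ha0
        · exact Eventually.of_forall fun x => lt_of_lt_of_le ha0 (hIfunNonneg x)
        · obtain ⟨a', haa', ha't⟩ := exists_between ha
          have ha'pos : 0 < a' := lt_of_le_of_lt ha0 haa'
          have hda' : ℓd a' < t := (hltI t a' ht ha'pos).1 ha't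
          filter_upwards [eventually_gt_nhds hda'] with x hx
          have hx0 : 0 < x := lt_trans (hdpos a' ha'pos) hx
          rw [hIfunEq x hx0]
          exact lt_trans haa' ((hltI x a' hx0 ha'pos).2 hx)
      · intro b hb
        obtain ⟨b', htb', hb'b⟩ := exists_between hb
        have hb'pos : 0 < b' := lt_trans (hIpos t ht) htb'
        have hdb' : t < ℓd b' := (hIlt t b' ht hb'pos).1 htb'
        filter_upwards [eventually_lt_nhds hdb', eventually_gt_nhds ht] with x hx1 hx0
        rw [hIfunEq x hx0]
        exact lt_trans ((hIlt x b' hx0 hb'pos).2 hx1) hb'b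
    rw [ContinuousAt, hIfunEq t ht]
    exact this
  have hIfun_top : Tendsto Ifun atTop atTop := by
    rw [tendsto_atTop]
    intro b
    have hb1 : 0 < max b 1 := lt_of_lt_of_le one_pos (le_max_right _ _)
    filter_upwards [eventually_ge_atTop (ℓd (max b 1) + 1)] with x hx
    have hx0 : 0 < x := by have := hdpos _ hb1; linarith
    rw [hIfunEq x hx0]
    have : max b 1 < I x := (hltI x (max b 1) hx0 hb1).2 (by linarith)
    exact le_trans (le_max_left _ _) this.le
  have hIfun_zero : Tendsto Ifun (nhdsWithin 0 (Ioi 0)) (nhds 0) := by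
    rw [tendsto_order]
    constructor
    · intro a ha
      exact Eventually.of_forall fun x => lt_of_lt_of_le ha (hIfunNonneg x)
    · intro b hb
      filter_upwards [(eventually_lt_nhds (hdpos b hb)).filter_mono nhdsWithin_le_nhds,
        self_mem_nhdsWithin] with x hx1 hx2
      rw [hIfunEq x hx2]
      exact (hIlt x b hx2 hb).2 hx1
  -- facts about φh
  have hφhEq : ∀ c : ℝ, 0 < c → ∀ ω,
      φh c ω = if 0 < G ω then 1 - min (Ifun (c * V ω) / G ω) 1 else 0 := by
    intro c hc ω
    rw [hφh c ω, hIfunEq _ (mul_pos hc (hVpos ω))]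
  have hφmeas : ∀ c : ℝ, 0 < c → Measurable (φh c) := by
    intro c hc
    have h : φh c = fun ω => if 0 < G ω then 1 - min (Ifun (c * V ω) / G ω) 1 else 0 :=
      funext (hφhEq c hc)
    rw [h]
    exact Measurable.ite (measurableSet_lt measurable_const hGmeas)
      (measurable_const.sub
        (((hIfunMeas.comp (hVmeas.const_mul c)).div hGmeas).min measurable_const))
      measurable_const
  have hφ01 : ∀ c : ℝ, 0 < c → ∀ ω, φh c ω ∈ Icc (0:ℝ) 1 := by
    intro c hc ω
    rw [hφh c ω]
    split_ifs with h
    · have h1 : min (I (c * V ω) / G ω) 1 ≤ 1 := min_le_right _ _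
      have h2 : 0 ≤ min (I (c * V ω) / G ω) 1 :=
        le_min (div_pos (hIpos _ (mul_pos hc (hVpos ω))) h).le zero_le_one
      constructor <;> linarith
    · exact ⟨le_refl 0, zero_le_one⟩
  have hVGφ_int : ∀ φ : Ω → ℝ, Measurable φ → (∀ ω, φ ω ∈ Icc (0:ℝ) 1) →
      Integrable (fun ω => V ω * G ω * φ ω) P := by
    intro φ hm h01
    refine hVG.mono' ((hVmeas.mul hGmeas).mul hm).aestronglyMeasurable
      (Eventually.of_forall fun ω => ?_)
    have hVGnn : 0 ≤ V ω * G ω := mul_nonneg (hVpos ω).le (hGpos ω)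
    rw [Real.norm_eq_abs, abs_of_nonneg (mul_nonneg hVGnn (h01 ω).1)]
    exact mul_le_of_le_one_right hVGnn (h01 ω).2
  have hφh_anti : ∀ c1 c2 : ℝ, 0 < c1 → c1 ≤ c2 → ∀ ω, φh c2 ω ≤ φh c1 ω := by
    intro c1 c2 h1 h12 ω
    rw [hφh c1 ω, hφh c2 ω]
    split_ifs with h
    · have hImono : I (c1 * V ω) ≤ I (c2 * V ω) := by
        rcases eq_or_lt_of_le h12 with rfl | hlt
        · exact le_refl _
        · exact ((hIltIff _ _ (mul_pos h1 (hVpos ω))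
            (mul_pos (h1.trans hlt) (hVpos ω))).2
            (mul_lt_mul_of_pos_right hlt (hVpos ω))).le
      have : min (I (c1 * V ω) / G ω) 1 ≤ min (I (c2 * V ω) / G ω) 1 := by
        apply min_le_min _ (le_refl 1)
        gcongr
      linarith
    · exact le_refl 0
  -- continuity of k
  have hkfun : k = fun c => ∫ ω, V ω * G ω * φh c ω ∂P := funext hk
  have hkcont : ∀ c : ℝ, 0 < c → ContinuousAt k c := by
    intro c hc
    rw [hkfun]
    apply continuousAt_of_dominated (bound := fun ω => V ω * G ω)
    · filter_upwards [eventually_gt_nhds hc] with c' hc'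
      exact ((hVmeas.mul hGmeas).mul (hφmeas c' hc')).aestronglyMeasurable
    · filter_upwards [eventually_gt_nhds hc] with c' hc'
      refine Eventually.of_forall fun ω => ?_
      have hVGnn : 0 ≤ V ω * G ω := mul_nonneg (hVpos ω).le (hGpos ω)
      rw [Real.norm_eq_abs, abs_of_nonneg (mul_nonneg hVGnn (hφ01 c' hc' ω).1)]
      exact mul_le_of_le_one_right hVGnn (hφ01 c' hc' ω).2
    · exact hVG
    · refine Eventually.of_forall fun ω => ?_
      by_cases hG : 0 < G ω
      · have hEq : (fun c' => V ω * G ω *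
            (1 - min (Ifun (c' * V ω) / G ω) 1)) =ᶠ[nhds c] fun c' => V ω * G ω * φh c' ω := by
          filter_upwards [eventually_gt_nhds hc] with c' hc'
          rw [hφhEq c' hc' ω, if_pos hG]
        refine ContinuousAt.congr ?_ hEq
        have hmulc : ContinuousAt (fun c' : ℝ => c' * V ω) c :=
          (continuous_mul_right (V ω)).continuousAt
        have hinner : ContinuousAt (fun c' : ℝ => Ifun (c' * V ω)) c :=
          (hIfunCont _ (mul_pos hc (hVpos ω))).tendsto.comp hmulc
        exact continuousAt_const.mul
          (continuousAt_const.sub ((hinner.div_const _).min continuousAt_const))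
      · have hEq : (fun c' : ℝ => V ω * G ω * φh c' ω) = fun _ => 0 := by
          funext c'
          rw [hφh c' ω, if_neg hG, mul_zero]
        rw [hEq]
        exact continuousAt_const
  -- limits of k
  have hk_top : Tendsto k atTop (nhds 0) := by
    rw [hkfun]
    have h0 : (0:ℝ) = ∫ _ : Ω, (0:ℝ) ∂P := by simp
    rw [h0]
    apply tendsto_integral_filter_of_dominated_convergence (fun ω => V ω * G ω)
    · filter_upwards [eventually_gt_atTop (0:ℝ)] with c' hc'
      exact ((hVmeas.mul hGmeas).mul (hφmeas c' hc')).aestronglyMeasurable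
    · filter_upwards [eventually_gt_atTop (0:ℝ)] with c' hc'
      refine Eventually.of_forall fun ω => ?_
      have hVGnn : 0 ≤ V ω * G ω := mul_nonneg (hVpos ω).le (hGpos ω)
      rw [Real.norm_eq_abs, abs_of_nonneg (mul_nonneg hVGnn (hφ01 c' hc' ω).1)]
      exact mul_le_of_le_one_right hVGnn (hφ01 c' hc' ω).2
    · exact hVG
    · refine Eventually.of_forall fun ω => ?_
      by_cases hG : 0 < G ω
      · have htop : Tendsto (fun c : ℝ => Ifun (c * V ω)) atTop atTop :=
          hIfun_top.comp (Tendsto.atTop_mul_const (hVpos ω) tendsto_id)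
        apply Tendsto.congr' _ tendsto_const_nhds
        filter_upwards [htop.eventually_ge_atTop (G ω), eventually_gt_atTop (0:ℝ)]
          with c h1 hcpos
        have hmin : min (Ifun (c * V ω) / G ω) 1 = 1 :=
          min_eq_right ((one_le_div hG).2 h1)
        rw [hφhEq c hcpos ω, if_pos hG, hmin]
        ring
      · apply Tendsto.congr _ tendsto_const_nhds
        intro c
        rw [hφh c ω, if_neg hG, mul_zero]
  have hk_zero : Tendsto k (nhdsWithin 0 (Ioi 0)) (nhds (∫ ω, V ω * G ω ∂P)) := by
    rw [hkfun]
    apply tendsto_integral_filter_of_dominated_convergence (fun ω => V ω * G ω)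
    · filter_upwards [self_mem_nhdsWithin] with c' hc'
      exact ((hVmeas.mul hGmeas).mul (hφmeas c' hc')).aestronglyMeasurable
    · filter_upwards [self_mem_nhdsWithin] with c' hc'
      refine Eventually.of_forall fun ω => ?_
      have hVGnn : 0 ≤ V ω * G ω := mul_nonneg (hVpos ω).le (hGpos ω)
      rw [Real.norm_eq_abs, abs_of_nonneg (mul_nonneg hVGnn (hφ01 c' hc' ω).1)]
      exact mul_le_of_le_one_right hVGnn (hφ01 c' hc' ω).2
    · exact hVG
    · refine Eventually.of_forall fun ω => ?_
      by_cases hG : 0 < G ω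
      · set g : ℝ → ℝ := fun t => V ω * G ω * (1 - min (t / G ω) 1) with hg_def
        have hgcont : Continuous g :=
          continuous_const.mul
            (continuous_const.sub ((continuous_id.div_const _).min continuous_const))
        have hcomp : Tendsto (fun c : ℝ => c * V ω) (nhdsWithin 0 (Ioi 0))
            (nhdsWithin 0 (Ioi 0)) := by
          rw [tendsto_nhdsWithin_iff]
          constructor
          · have h1 : Tendsto (fun c : ℝ => c * V ω) (nhds 0) (nhds 0) := by
              have := (continuous_mul_right (V ω)).tendsto (0:ℝ)
              simpa using this
            exact h1.mono_left nhdsWithin_le_nhds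
          · filter_upwards [self_mem_nhdsWithin] with c hc
            exact mul_pos hc (hVpos ω)
        have hIc : Tendsto (fun c : ℝ => Ifun (c * V ω)) (nhdsWithin 0 (Ioi 0)) (nhds 0) :=
          hIfun_zero.comp hcomp
        have hgt : Tendsto (fun c : ℝ => g (Ifun (c * V ω))) (nhdsWithin 0 (Ioi 0))
            (nhds (g 0)) := (hgcont.continuousAt.tendsto).comp hIc
        have hg0 : g 0 = V ω * G ω := by
          rw [hg_def]
          simp [zero_div, min_eq_left zero_le_one]
        rw [hg0] at hgt
        apply Tendsto.congr' _ hgt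
        filter_upwards [self_mem_nhdsWithin] with c hc
        rw [hφhEq c hc ω, if_pos hG, hg_def]
      · have hG0 : G ω = 0 := le_antisymm (not_lt.1 hG) (hGpos ω)
        have heq : (fun c : ℝ => V ω * G ω * φh c ω) = fun _ => V ω * G ω := by
          funext c
          simp [hφh c ω, if_neg hG, hG0]
        rw [heq]
        exact tendsto_const_nhds
  -- existence
  have hex : ∃ c : ℝ, 0 < c ∧ k c = y := by
    have h1 : ∀ᶠ c in nhdsWithin 0 (Ioi 0), y < k c :=
      hk_zero.eventually (eventually_gt_nhds hy')
    obtain ⟨a, hya, ha⟩ := (h1.and self_mem_nhdsWithin).exists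
    have h2 : ∀ᶠ c in atTop, k c < y := hk_top.eventually (eventually_lt_nhds hy)
    obtain ⟨b, hb, hab⟩ := (h2.and (eventually_ge_atTop a)).exists
    have hcont : ContinuousOn k (Icc a b) := fun x hx =>
      (hkcont x (lt_of_lt_of_le ha hx.1)).continuousWithinAt
    obtain ⟨c, hc, hcy⟩ := intermediate_value_Icc' hab hcont ⟨hb.le, hya.le⟩
    exact ⟨c, lt_of_lt_of_le ha hc.1, hcy⟩
  -- uniqueness
  have huniq : ∀ c1 c2 : ℝ, 0 < c1 → c1 < c2 → k c1 = y → k c2 = y → False := by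
    intro c1 c2 h1 h12 hk1 hk2
    have h2 : 0 < c2 := h1.trans h12
    have hfint := hVGφ_int (φh c1) (hφmeas c1 h1) (hφ01 c1 h1)
    have hgint := hVGφ_int (φh c2) (hφmeas c2 h2) (hφ01 c2 h2)
    have hle : ∀ ω, V ω * G ω * φh c2 ω ≤ V ω * G ω * φh c1 ω := fun ω =>
      mul_le_mul_of_nonneg_left (hφh_anti c1 c2 h1 h12.le ω)
        (mul_nonneg (hVpos ω).le (hGpos ω))
    have hsub : ∫ ω, (V ω * G ω * φh c1 ω - V ω * G ω * φh c2 ω) ∂P = 0 := by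
      rw [integral_sub hfint hgint, ← hk c1, ← hk c2, hk1, hk2, sub_self]
    have hae : (fun ω => V ω * G ω * φh c1 ω - V ω * G ω * φh c2 ω) =ᵐ[P] 0 :=
      (integral_eq_zero_iff_of_nonneg (fun ω => sub_nonneg.2 (hle ω))
        (hfint.sub hgint)).1 hsub
    have hzero' : ∀ ω, V ω * G ω * φh c1 ω - V ω * G ω * φh c2 ω = 0 →
        V ω * G ω * φh c1 ω = 0 := by
      intro ω hfg
      by_cases hG : 0 < G ω
      · have hVG0 : 0 < V ω * G ω := mul_pos (hVpos ω) hG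
        have hφeq : φh c1 ω = φh c2 ω :=
          mul_left_cancel₀ (ne_of_gt hVG0) (sub_eq_zero.1 hfg)
        rw [hφh c1 ω, hφh c2 ω, if_pos hG, if_pos hG] at hφeq
        have hmin : min (I (c1 * V ω) / G ω) 1 = min (I (c2 * V ω) / G ω) 1 := by linarith
        have hIlt' : I (c1 * V ω) < I (c2 * V ω) :=
          (hIltIff _ _ (mul_pos h1 (hVpos ω)) (mul_pos h2 (hVpos ω))).2
            (mul_lt_mul_of_pos_right h12 (hVpos ω))
        have h1le : 1 ≤ I (c1 * V ω) / G ω := by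
          by_contra hlt
          push_neg at hlt
          have hm1 : min (I (c1 * V ω) / G ω) 1 = I (c1 * V ω) / G ω := min_eq_left hlt.le
          have hdivlt : I (c1 * V ω) / G ω < I (c2 * V ω) / G ω := by gcongr
          have hlt2 : I (c1 * V ω) / G ω < min (I (c2 * V ω) / G ω) 1 := lt_min hdivlt hlt
          rw [← hmin, hm1] at hlt2
          exact lt_irrefl _ hlt2
        have hm : min (I (c1 * V ω) / G ω) 1 = 1 := min_eq_right h1le
        rw [hφh c1 ω, if_pos hG, hm, sub_self, mul_zero]
      · rw [hφh c1 ω, if_neg hG, mul_zero]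
    have hfae : (fun ω => V ω * G ω * φh c1 ω) =ᵐ[P] 0 := by
      filter_upwards [hae] with ω h
      exact hzero' ω (by simpa using h)
    have hzero_int : ∫ ω, V ω * G ω * φh c1 ω ∂P = 0 := by
      rw [integral_congr_ae hfae]; simp
    rw [← hk c1, hk1] at hzero_int
    linarith
  constructor
  · obtain ⟨c, hc, hcy⟩ := hex
    refine ⟨c, ⟨hc, hcy⟩, ?_⟩
    rintro c' ⟨hc', hcy'⟩
    rcases lt_trichotomy c' c with h | h | h
    · exact absurd (huniq c' c hc' h hcy' hcy) (fun hF => hF)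
    · exact h
    · exact absurd (huniq c c' hc h hcy hcy') (fun hF => hF)
  · intro c hc hkc
    have hsat : ∫ ω, V ω * G ω * φh c ω ∂P = y := by rw [← hk c]; exact hkc
    refine ⟨hsat, ?_⟩
    intro φ hφm hφ01' hbud
    have subgrad : ∀ a ∈ Ici (0:ℝ), ∀ b ∈ Ici (0:ℝ), ℓ a + ℓd a * (b - a) ≤ ℓ b :=
      fun a ha b hb => subgrad_aux hderiv hsconv.convexOn ha hb
    -- pointwise inequality
    have hpoint : ∀ ω, ℓ ((1 - φh c ω) * G ω) + c * (V ω * G ω * φh c ω)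
        - c * (V ω * G ω * φ ω) ≤ ℓ ((1 - φ ω) * G ω) := by
      intro ω
      by_cases hG : 0 < G ω
      · have hb0 : (0:ℝ) ≤ (1 - φ ω) * G ω :=
          mul_nonneg (by linarith [(hφ01' ω).2]) (hGpos ω)
        have hIcV : 0 < I (c * V ω) := hIpos _ (mul_pos hc (hVpos ω))
        have hamin : (1 - φh c ω) * G ω = min (I (c * V ω)) (G ω) := by
          rw [hφh c ω, if_pos hG, sub_sub_cancel,
            min_mul_of_nonneg _ _ (hGpos ω), div_mul_cancel₀ _ (ne_of_gt hG), one_mul]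
        have ha0 : (0:ℝ) ≤ (1 - φh c ω) * G ω := by
          rw [hamin]; exact le_min hIcV.le (hGpos ω)
        have hsg := subgrad _ ha0 _ hb0
        have hba : (1 - φ ω) * G ω - (1 - φh c ω) * G ω = (φh c ω - φ ω) * G ω := by ring
        rcases le_or_gt (I (c * V ω)) (G ω) with hcase | hcase
        · have haI : (1 - φh c ω) * G ω = I (c * V ω) := by rw [hamin, min_eq_left hcase]
          have hda : ℓd ((1 - φh c ω) * G ω) = c * V ω := by
            rw [haI, hIval _ (mul_pos hc (hVpos ω))]
          have hkey : ℓd ((1 - φh c ω) * G ω) * ((1 - φ ω) * G ω - (1 - φh c ω) * G ω)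
              = c * (V ω * G ω * φh c ω) - c * (V ω * G ω * φ ω) := by
            rw [hda, hba]; ring
          linarith
        · have haG : (1 - φh c ω) * G ω = G ω := by rw [hamin, min_eq_right hcase.le]
          have hdle : ℓd ((1 - φh c ω) * G ω) ≤ c * V ω := by
            rw [haG]
            have h := hdSM (hGpos ω) hIcV.le hcase
            rw [hIval _ (mul_pos hc (hVpos ω))] at h
            exact h.le
          have hba_np : (1 - φ ω) * G ω - (1 - φh c ω) * G ω ≤ 0 := by
            rw [haG]
            nlinarith [(hφ01' ω).1, hGpos ω]
          have hmul : c * V ω * ((1 - φ ω) * G ω - (1 - φh c ω) * G ω)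
              ≤ ℓd ((1 - φh c ω) * G ω) * ((1 - φ ω) * G ω - (1 - φh c ω) * G ω) :=
            mul_le_mul_of_nonpos_right hdle hba_np
          have hkey : c * V ω * ((1 - φ ω) * G ω - (1 - φh c ω) * G ω)
              = c * (V ω * G ω * φh c ω) - c * (V ω * G ω * φ ω) := by
            rw [hba]; ring
          linarith
      · have hG0 : G ω = 0 := le_antisymm (not_lt.1 hG) (hGpos ω)
        simp [hG0, hzero]
    -- integrability of the loss terms
    have hℓcont : ContinuousOn ℓ (Ici 0) := fun x hx => (hderiv x hx).continuousWithinAt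
    have hLcont : Continuous (fun x : ℝ => ℓ (max x 0)) :=
      hℓcont.comp_continuous (continuous_id.max continuous_const)
        (fun x => Set.mem_Ici.2 (le_max_right _ _))
    have hℓmono : MonotoneOn ℓ (Ici 0) := hincr.monotoneOn
    have hℓnonneg : ∀ x : ℝ, 0 ≤ x → 0 ≤ ℓ x := by
      intro x hx
      rcases eq_or_lt_of_le hx with rfl | h
      · rw [hzero]
      · rw [← hzero]
        exact (hincr (Set.mem_Ici.2 (le_refl 0)) (Set.mem_Ici.2 h.le) h).le
    have hloss_int : ∀ ψ : Ω → ℝ, Measurable ψ → (∀ ω, ψ ω ∈ Icc (0:ℝ) 1) →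
        Integrable (fun ω => ℓ ((1 - ψ ω) * G ω)) P := by
      intro ψ hm h01
      have harg : ∀ ω, 0 ≤ (1 - ψ ω) * G ω := fun ω =>
        mul_nonneg (by linarith [(h01 ω).2]) (hGpos ω)
      have hEq : (fun ω => ℓ ((1 - ψ ω) * G ω))
          = fun ω => ℓ (max ((1 - ψ ω) * G ω) 0) :=
        funext fun ω => by rw [max_eq_left (harg ω)]
      rw [hEq]
      refine hℓG.mono'
        (hLcont.measurable.comp ((measurable_const.sub hm).mul hGmeas)).aestronglyMeasurable
        (Eventually.of_forall fun ω => ?_)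
      rw [max_eq_left (harg ω), Real.norm_eq_abs, abs_of_nonneg (hℓnonneg _ (harg ω))]
      have hle : (1 - ψ ω) * G ω ≤ G ω := by nlinarith [(h01 ω).1, hGpos ω]
      exact hℓmono (harg ω) (hGpos ω) hle
    have hA := hloss_int (φh c) (hφmeas c hc) (hφ01 c hc)
    have hB := hloss_int φ hφm hφ01'
    have hVGφh' := hVGφ_int (φh c) (hφmeas c hc) (hφ01 c hc)
    have hVGφ' := hVGφ_int φ hφm hφ01'
    have hCint : Integrable (fun ω => c * (V ω * G ω * φ ω)) P := hVGφ'.const_mul c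
    have hC'int : Integrable (fun ω => c * (V ω * G ω * φh c ω)) P := hVGφh'.const_mul c
    have hABint : Integrable
        (fun ω => ℓ ((1 - φh c ω) * G ω) + c * (V ω * G ω * φh c ω)) P := hA.add hC'int
    have hint_le : ∫ ω, (ℓ ((1 - φh c ω) * G ω) + c * (V ω * G ω * φh c ω)
        - c * (V ω * G ω * φ ω)) ∂P ≤ ∫ ω, ℓ ((1 - φ ω) * G ω) ∂P :=
      integral_mono (hABint.sub hCint) hB hpoint
    rw [integral_sub hABint hCint, integral_add hA hC'int,
      integral_const_mul, integral_const_mul, hsat] at hint_le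
    have hmul_le : c * (∫ ω, V ω * G ω * φ ω ∂P) ≤ c * y :=
      mul_le_mul_of_nonneg_left hbud hc.le
    linarith
end

section
/- Let (Ω, F, P) be a probability space and W : Ω → [0, ∞) an integrable random variable, and fix y with 0 < y < E[W]. Then the set {c > 0 : E[W·1_{cW < 1}] ≤ y} is nonempty, so ĉ := inf{c > 0 : E[W·1_{cW < 1}] ≤ y} is well defined and ĉ > 0. Assume moreover that E[W·1_{ĉW < 1}] = y. Then the set A := {ĉW < 1} is optimal for the quantile problem: for every measurable φ : Ω → [0, 1] with E[Wφ] ≤ y, one has E[φ] ≤ P(ĉW < 1). -/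
open MeasureTheory Set

/-- **Quantile hedging, static form.**
For an integrable `W ≥ 0` and `0 < y < E[W]`, the set `{c > 0 : E[W·1_{cW<1}] ≤ y}` is
nonempty, its infimum `ĉ` is (strictly) positive, and if `E[W·1_{ĉW<1}] = y` then the event
`{ĉW < 1}` is optimal: every randomized test `φ : Ω → [0,1]` with `E[Wφ] ≤ y` satisfies
`E[φ] ≤ P(ĉW < 1)`. -/
theorem stmt_13
    {Ω : Type*} [MeasurableSpace Ω] (P : Measure Ω) [IsProbabilityMeasure P]
    (W : Ω → ℝ) (hWmeas : Measurable W) (hWpos : ∀ ω, 0 ≤ W ω)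
    (hWint : Integrable W P)
    (y : ℝ) (hy : 0 < y) (hy' : y < ∫ ω, W ω ∂P)
    (S : Set ℝ)
    (hS : S = {c : ℝ | 0 < c ∧ (∫ ω in {ω | c * W ω < 1}, W ω ∂P) ≤ y}) :
    S.Nonempty ∧ 0 < sInf S ∧
    ((∫ ω in {ω | sInf S * W ω < 1}, W ω ∂P) = y →
      ∀ φ : Ω → ℝ, Measurable φ → (∀ ω, φ ω ∈ Icc (0:ℝ) 1) →
        (∫ ω, W ω * φ ω ∂P) ≤ y →
        (∫ ω, φ ω ∂P) ≤ (P {ω | sInf S * W ω < 1}).toReal) := by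
  have hAmeas : ∀ c : ℝ, MeasurableSet {ω | c * W ω < 1} := fun c =>
    measurableSet_lt (measurable_const.mul hWmeas) measurable_const
  -- Nonemptiness: c = 1/y works
  have hmem : (1/y) ∈ S := by
    rw [hS]
    refine ⟨by positivity, ?_⟩
    have hsub : ∀ ω ∈ {ω | (1/y) * W ω < 1}, W ω ≤ y := by
      intro ω hω
      have hω' : W ω / y < 1 := by
        simpa [div_eq_inv_mul, one_div] using hω
      exact ((div_lt_one hy).1 hω').le
    calc (∫ ω in {ω | (1/y) * W ω < 1}, W ω ∂P)
        ≤ ∫ _ω in {ω | (1/y) * W ω < 1}, y ∂P := by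
          apply setIntegral_mono_on hWint.integrableOn
            (integrableOn_const (measure_lt_top _ _).ne) (hAmeas _) hsub
      _ = (P {ω | (1/y) * W ω < 1}).toReal * y := by
          rw [setIntegral_const, smul_eq_mul, measureReal_def]
      _ ≤ 1 * y := by
          apply mul_le_mul_of_nonneg_right _ hy.le
          exact_mod_cast ENNReal.toReal_le_of_le_ofReal zero_le_one
            (by simpa using prob_le_one)
      _ = y := one_mul y
  have hne : S.Nonempty := ⟨_, hmem⟩
  -- Positivity of sInf S
  have hmono := tendsto_setIntegral_of_monotone (μ := P) (f := W)
    (s := fun n : ℕ => {ω | W ω < n})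
    (fun n => measurableSet_lt hWmeas measurable_const)
    (fun n m hnm ω (hω : W ω < n) => lt_of_lt_of_le hω (by exact_mod_cast hnm))
    (by
      have : (⋃ n : ℕ, {ω | W ω < n}) = univ := by
        ext ω
        simp only [mem_iUnion, mem_setOf_eq, mem_univ, iff_true]
        exact exists_nat_gt (W ω)
      rw [this]
      exact hWint.integrableOn)
  have huniv : (⋃ n : ℕ, {ω | W ω < n}) = univ := by
    ext ω
    simp only [mem_iUnion, mem_setOf_eq, mem_univ, iff_true]
    exact exists_nat_gt (W ω)
  rw [huniv, setIntegral_univ] at hmono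
  have hev : ∀ᶠ n : ℕ in Filter.atTop, y < ∫ ω in {ω | W ω < n}, W ω ∂P :=
    hmono.eventually (lt_mem_nhds hy')
  obtain ⟨N, hN⟩ := Filter.eventually_atTop.1 hev
  set n := max N 1 with hn
  have hyn : y < ∫ ω in {ω | W ω < n}, W ω ∂P := hN n (le_max_left _ _)
  have hnpos : (0:ℝ) < n := by
    have : 1 ≤ n := le_max_right _ _
    exact_mod_cast this
  have hlb : ∀ c ∈ S, (1:ℝ)/n ≤ c := by
    intro c hc
    rw [hS] at hc
    by_contra h
    push_neg at h
    have hsub : {ω | W ω < (n:ℝ)} ⊆ {ω | c * W ω < 1} := by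
      intro ω (hω : W ω < (n:ℝ))
      have h1 : c * W ω ≤ (1/n) * W ω := mul_le_mul_of_nonneg_right h.le (hWpos ω)
      have h2 : (1/(n:ℝ)) * W ω < (1/n) * n :=
        mul_lt_mul_of_pos_left hω (by positivity)
      have h3 : (1/(n:ℝ)) * n = 1 := by field_simp
      show c * W ω < 1
      linarith
    have : (∫ ω in {ω | W ω < (n:ℝ)}, W ω ∂P) ≤ ∫ ω in {ω | c * W ω < 1}, W ω ∂P := by
      apply setIntegral_mono_set hWint.integrableOn
        (Filter.Eventually.of_forall hWpos) (HasSubset.Subset.eventuallyLE hsub)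
    linarith [hc.2]
  have hpos : 0 < sInf S := lt_of_lt_of_le (by positivity) (le_csInf hne hlb)
  refine ⟨hne, hpos, ?_⟩
  -- Optimality: Neyman–Pearson argument
  intro hEq φ hφmeas hφmem hφbud
  set c := sInf S with hc
  set A := {ω | c * W ω < 1} with hA
  have hAm : MeasurableSet A := hAmeas c
  -- integrability facts
  have hφint : Integrable φ P := by
    apply (integrable_const (1:ℝ)).mono' hφmeas.aestronglyMeasurable
    filter_upwards with ω
    have := hφmem ω
    rw [Real.norm_eq_abs, abs_le]
    constructor <;> linarith [this.1, this.2]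
  have hφWint : Integrable (fun ω => φ ω * W ω) P :=
    hWint.bdd_mul hφmeas.aestronglyMeasurable
      (Filter.Eventually.of_forall fun ω => by
        have := hφmem ω
        rw [Real.norm_eq_abs, abs_le]
        exact ⟨by linarith [this.1], this.2⟩)
  have hWφint : Integrable (fun ω => W ω * φ ω) P := by
    simpa [mul_comm] using hφWint
  have hIndint : Integrable (A.indicator fun _ => (1:ℝ)) P :=
    (integrable_const (1:ℝ)).indicator hAm
  have hIndWint : Integrable (A.indicator W) P := hWint.indicator hAm
  -- the key nonnegative function
  set g : Ω → ℝ := fun ω =>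
    (A.indicator (fun _ => (1:ℝ)) ω - φ ω) * (1 - c * W ω) with hg
  have hg_nonneg : ∀ ω, 0 ≤ g ω := by
    intro ω
    by_cases hω : ω ∈ A
    · have h1 : A.indicator (fun _ => (1:ℝ)) ω = 1 := indicator_of_mem hω (fun _ => (1:ℝ))
      have h2 : c * W ω < 1 := hω
      have h3 := hφmem ω
      simp only [hg, h1]
      nlinarith [h3.2]
    · have h1 : A.indicator (fun _ => (1:ℝ)) ω = 0 := indicator_of_notMem hω (fun _ => (1:ℝ))
      have h2 : ¬ c * W ω < 1 := hω
      push_neg at h2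
      have h3 := hφmem ω
      simp only [hg, h1]
      nlinarith [h3.1]
  have hg_eq : ∀ ω, g ω = A.indicator (fun _ => (1:ℝ)) ω - φ ω
      - c * A.indicator W ω + c * (W ω * φ ω) := by
    intro ω
    by_cases hω : ω ∈ A <;>
      simp [hg, indicator_of_mem, indicator_of_notMem, hω] <;> ring
  have hint1 : Integrable (fun ω => A.indicator (fun _ => (1:ℝ)) ω - φ ω) P :=
    hIndint.sub hφint
  have hint2 : Integrable (fun ω => c * A.indicator W ω) P := hIndWint.const_mul c
  have hint3 : Integrable (fun ω => A.indicator (fun _ => (1:ℝ)) ω - φ ω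
      - c * A.indicator W ω) P := hint1.sub hint2
  have hint4 : Integrable (fun ω => c * (W ω * φ ω)) P := hWφint.const_mul c
  have hg_int : (∫ ω, g ω ∂P) =
      (P A).toReal - (∫ ω, φ ω ∂P) - c * y + c * ∫ ω, W ω * φ ω ∂P := by
    have e1 : (∫ ω, g ω ∂P) = ∫ ω, (A.indicator (fun _ => (1:ℝ)) ω - φ ω
        - c * A.indicator W ω + c * (W ω * φ ω)) ∂P :=
      integral_congr_ae (Filter.Eventually.of_forall hg_eq)
    rw [e1, integral_add hint3 hint4, integral_sub hint1 hint2,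
      integral_sub hIndint hφint, integral_const_mul, integral_const_mul,
      integral_indicator hAm, integral_indicator hAm, hEq, setIntegral_const, measureReal_def,
      smul_eq_mul, mul_one]
  have h0 : 0 ≤ ∫ ω, g ω ∂P := integral_nonneg hg_nonneg
  rw [hg_int] at h0
  have hterm : c * (∫ ω, W ω * φ ω ∂P) ≤ c * y :=
    mul_le_mul_of_nonneg_left hφbud hpos.le
  show (∫ ω, φ ω ∂P) ≤ (P A).toReal
  linarith
end

section
/- Let Ω be a nonempty finite set, P a probability measure on Ω with P({ω}) > 0 for every ω, H : Ω → (0, ∞) with E[H] = 1, and x ∈ ℝ. Let U : ℝ → ℝ be differentiable, strictly concave and strictly increasing, with derivative U' satisfying the Inada conditions U'(z) → ∞ as z → −∞ and U'(z) → 0 as z → +∞ (so that U' is a strictly decreasing bijection from ℝ onto (0, ∞)); let I := (U')⁻¹ : (0, ∞) → ℝ and define Ũ(y) := sup_{z ∈ ℝ} (U(z) − zy) for y > 0. Then: (i) there exists λ̂ > 0 with E[H·I(λ̂H)] = x; (ii) sup { E[U(G)] : G : Ω → ℝ, E[HG] ≤ x } = E[U(I(λ̂H))] = E[Ũ(λ̂H)]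 + λ̂x, and the supremum is attained at Ĝ := I(λ̂H); (iii) E[Ũ(λ̂H)] + λ̂x = min_{λ > 0} (E[Ũ(λH)] + λx). -/
open MeasureTheory Set Filter

/-- **Convex duality for utility maximization on a finite probability space.**
With a pricing density `H > 0`, `E[H] = 1`, and a strictly concave, strictly increasing,
differentiable utility `U` satisfying the Inada conditions, with `I = (U')⁻¹` and
`Ũ(y) = sup_z (U(z) − z y)`: (i) there exists `λ̂ > 0` with `E[H·I(λ̂H)] = x`;
(ii) the supremum of `E[U(G)]` over `E[HG] ≤ x` equals `E[U(I(λ̂H))] = E[Ũ(λ̂H)] + λ̂x`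
and is attained at `Ĝ = I(λ̂H)`; (iii) `λ̂` minimizes `λ ↦ E[Ũ(λH)] + λx` over `λ > 0`. -/
theorem stmt_14
    {Ω : Type*} [Fintype Ω] [Nonempty Ω] [MeasurableSpace Ω] [MeasurableSingletonClass Ω]
    (P : Measure Ω) [IsProbabilityMeasure P] (hP : ∀ ω : Ω, 0 < P {ω})
    (H : Ω → ℝ) (hH : ∀ ω, 0 < H ω) (hHmean : (∫ ω, H ω ∂P) = 1)
    (x : ℝ)
    (U Ud : ℝ → ℝ)
    (hUderiv : ∀ z, HasDerivAt U (Ud z) z)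
    (hUconc : StrictConcaveOn ℝ univ U)
    (hUincr : StrictMono U)
    (hInada1 : Tendsto Ud atBot atTop)
    (hInada2 : Tendsto Ud atTop (nhds 0))
    (I : ℝ → ℝ)
    (hI : ∀ y ∈ Ioi (0:ℝ), Ud (I y) = y)
    (hI' : ∀ z : ℝ, I (Ud z) = z)
    (Util : ℝ → ℝ)
    (hUtil : ∀ y : ℝ, Util y = sSup {r : ℝ | ∃ z : ℝ, r = U z - z * y}) :
    ∃ lam : ℝ, 0 < lam ∧
      -- (i) the Lagrange multiplier saturates the budget constraint
      (∫ ω, H ω * I (lam * H ω) ∂P) = x ∧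
      -- (ii) Ĝ = I(lam·H) is optimal for the utility maximization problem …
      (∀ G : Ω → ℝ, (∫ ω, H ω * G ω ∂P) ≤ x →
        (∫ ω, U (G ω) ∂P) ≤ ∫ ω, U (I (lam * H ω)) ∂P) ∧
      sSup {r : ℝ | ∃ G : Ω → ℝ, (∫ ω, H ω * G ω ∂P) ≤ x ∧ r = ∫ ω, U (G ω) ∂P}
        = ∫ ω, U (I (lam * H ω)) ∂P ∧
      -- … and the value equals the dual value
      (∫ ω, U (I (lam * H ω)) ∂P) = (∫ ω, Util (lam * H ω) ∂P) + lam * x ∧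
      -- (iii) lam minimizes the dual problem over positive multipliers
      (∀ lam' : ℝ, 0 < lam' →
        (∫ ω, Util (lam * H ω) ∂P) + lam * x ≤ (∫ ω, Util (lam' * H ω) ∂P) + lam' * x) := by
  classical
  -- weights
  set p : Ω → ℝ := fun ω => (P {ω}).toReal with hp_def
  have hp : ∀ ω, 0 < p ω := fun ω => ENNReal.toReal_pos (hP ω).ne' (measure_ne_top P _)
  have isum : ∀ f : Ω → ℝ, (∫ ω, f ω ∂P) = ∑ ω, p ω * f ω := by
    intro f
    rw [integral_fintype (f := f) (Integrable.of_finite)]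
    simp [smul_eq_mul, hp_def, Measure.real]
  -- `Ud` is strictly antitone and positive
  have hdiff : ∀ z, DifferentiableAt ℝ U z := fun z => (hUderiv z).differentiableAt
  have hderiv_eq : deriv U = Ud := funext fun z => (hUderiv z).deriv
  have hUdanti : StrictAnti Ud := by
    have h := hUconc.strictAntiOn_deriv (fun z _ => hdiff z)
    intro a b hab
    have := h (mem_univ a) (mem_univ b) hab
    rwa [hderiv_eq] at this
  have hUdnonneg : ∀ z, 0 ≤ Ud z := by
    intro z
    refine le_of_tendsto hInada2 (eventually_atTop.2 ⟨z, fun w hw => ?_⟩)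
    exact hUdanti.antitone hw
  have hUdpos : ∀ z, 0 < Ud z := fun z =>
    lt_of_le_of_lt (hUdnonneg (z + 1)) (hUdanti (lt_add_one z))
  -- gradient inequality for concave functions
  have hgrad : ∀ z w : ℝ, U z ≤ U w + Ud w * (z - w) := by
    intro z w
    rcases lt_trichotomy z w with h | h | h
    · obtain ⟨c, hc, hceq⟩ := exists_hasDerivAt_eq_slope U Ud h
        (fun t _ => (hUderiv t).continuousAt.continuousWithinAt) (fun t _ => hUderiv t)
      have h1 : Ud w ≤ (U w - U z) / (w - z) := by
        rw [← hceq]; exact (hUdanti hc.2).le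
      rw [le_div_iff₀ (by linarith)] at h1
      nlinarith
    · subst h; simp
    · obtain ⟨c, hc, hceq⟩ := exists_hasDerivAt_eq_slope U Ud h
        (fun t _ => (hUderiv t).continuousAt.continuousWithinAt) (fun t _ => hUderiv t)
      have h1 : (U z - U w) / (z - w) ≤ Ud w := by
        rw [← hceq]; exact (hUdanti hc.1).le
      rw [div_le_iff₀ (by linarith)] at h1
      nlinarith
  -- `I` is strictly antitone on the positive axis
  have hIanti : ∀ {y₁ y₂ : ℝ}, 0 < y₁ → y₁ < y₂ → I y₂ < I y₁ := by
    intro y₁ y₂ h1 h12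
    by_contra hle
    push_neg at hle
    have h2 : Ud (I y₂) ≤ Ud (I y₁) := hUdanti.antitone hle
    rw [hI y₁ (mem_Ioi.2 h1), hI y₂ (mem_Ioi.2 (h1.trans h12))] at h2
    exact absurd h12 (not_lt.2 h2)
  -- `I` is continuous on the positive axis
  set g : ℝ → ℝ := fun t => I (Real.exp (-t)) with hg_def
  have hgmono : StrictMono g := fun a b hab =>
    hIanti (Real.exp_pos _) (Real.exp_lt_exp.2 (neg_lt_neg hab))
  have hgsurj : Function.Surjective g := by
    intro z
    refine ⟨-Real.log (Ud z), ?_⟩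
    simp only [hg_def, neg_neg, Real.exp_log (hUdpos z), hI' z]
  have hgcont : Continuous g := hgmono.monotone.continuous_of_surjective hgsurj
  have hIcont : ContinuousOn I (Ioi 0) := by
    have hcomp : ContinuousOn (fun y => g (-Real.log y)) (Ioi 0) := by
      refine hgcont.comp_continuousOn ?_
      exact ((Real.continuousOn_log.mono (fun y hy => ne_of_gt hy)).neg)
    refine hcomp.congr ?_
    intro y hy
    simp only [hg_def, neg_neg, Real.exp_log (mem_Ioi.1 hy)]
  -- limit behaviour of `I`
  have hItop : ∀ M y : ℝ, 0 < y → y < Ud M → M < I y := by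
    intro M y hy hyM
    have h := hIanti hy hyM
    rwa [hI' M] at h
  have hIbot : ∀ M y : ℝ, Ud M < y → I y < M := by
    intro M y hy
    have h := hIanti (hUdpos M) hy
    rwa [hI' M] at h
  -- the budget function φ
  set φ : ℝ → ℝ := fun l => ∑ ω : Ω, p ω * (H ω * I (l * H ω)) with hφ_def
  have hφint : ∀ l : ℝ, (∫ ω, H ω * I (l * H ω) ∂P) = φ l := fun l =>
    isum (fun ω => H ω * I (l * H ω))
  have hφcont : ContinuousOn φ (Ioi 0) := by
    refine continuousOn_finset_sum _ fun ω _ => continuousOn_const.mul ?_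
    refine continuousOn_const.mul ?_
    refine hIcont.comp ((continuous_id.mul continuous_const).continuousOn) ?_
    intro l hl
    exact mem_Ioi.2 (mul_pos (mem_Ioi.1 hl) (hH ω))
  set n : ℝ := (Fintype.card Ω : ℝ) with hn_def
  have hn : 0 < n := by
    simp only [hn_def, Nat.cast_pos]
    exact Fintype.card_pos
  -- φ is eventually large near 0⁺
  have hsmall : ∀ᶠ l in nhdsWithin 0 (Ioi 0), x ≤ φ l := by
    have hev : ∀ ω : Ω, ∀ᶠ l in nhdsWithin 0 (Ioi 0),
        x / n ≤ p ω * (H ω * I (l * H ω)) := by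
      intro ω
      set c : ℝ := p ω * H ω with hc_def
      have hc : 0 < c := mul_pos (hp ω) (hH ω)
      set M : ℝ := (x / n) / c with hM_def
      have hmem : Ioo (0:ℝ) (Ud M / H ω) ∈ nhdsWithin (0:ℝ) (Ioi 0) :=
        Ioo_mem_nhdsGT_of_mem ⟨le_refl 0, div_pos (hUdpos M) (hH ω)⟩
      filter_upwards [hmem] with l hl
      have hy : 0 < l * H ω := mul_pos hl.1 (hH ω)
      have hyM : l * H ω < Ud M := by
        have := hl.2
        rw [lt_div_iff₀ (hH ω)] at this
        linarith
      have hMI : M < I (l * H ω) := hItop M _ hy hyM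
      have : c * M ≤ c * I (l * H ω) := mul_le_mul_of_nonneg_left hMI.le hc.le
      have hcM : c * M = x / n := by
        rw [hM_def]; field_simp
      calc x / n = c * M := hcM.symm
        _ ≤ c * I (l * H ω) := this
        _ = p ω * (H ω * I (l * H ω)) := by rw [hc_def]; ring
    have hall := (eventually_all).2 hev
    filter_upwards [hall] with l hl
    have hsum : ∑ ω : Ω, x / n ≤ φ l := Finset.sum_le_sum fun ω _ => hl ω
    have : ∑ _ω : Ω, x / n = x := by
      rw [Finset.sum_const, Finset.card_univ, nsmul_eq_mul]
      field_simp [hn_def]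
      rw [hn_def]; ring
    linarith [hsum, this.symm.le]
  -- φ is eventually small near +∞
  have hlarge : ∀ᶠ l in atTop, φ l ≤ x := by
    have hev : ∀ ω : Ω, ∀ᶠ l in atTop, p ω * (H ω * I (l * H ω)) ≤ x / n := by
      intro ω
      set c : ℝ := p ω * H ω with hc_def
      have hc : 0 < c := mul_pos (hp ω) (hH ω)
      set M : ℝ := (x / n) / c with hM_def
      filter_upwards [eventually_ge_atTop (Ud M / H ω + 1)] with l hl
      have hyM : Ud M < l * H ω := by
        have h1 : Ud M / H ω < l := by linarith
        rw [div_lt_iff₀ (hH ω)] at h1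
        linarith
      have hMI : I (l * H ω) < M := hIbot M _ hyM
      have : c * I (l * H ω) ≤ c * M := mul_le_mul_of_nonneg_left hMI.le hc.le
      have hcM : c * M = x / n := by rw [hM_def]; field_simp
      calc p ω * (H ω * I (l * H ω)) = c * I (l * H ω) := by rw [hc_def]; ring
        _ ≤ c * M := this
        _ = x / n := hcM
    have hall := (eventually_all).2 hev
    filter_upwards [hall] with l hl
    have hsum : φ l ≤ ∑ ω : Ω, x / n := Finset.sum_le_sum fun ω _ => hl ω
    have : ∑ _ω : Ω, x / n = x := by
      rw [Finset.sum_const, Finset.card_univ, nsmul_eq_mul]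
      field_simp [hn_def]
      rw [hn_def]; ring
    linarith [hsum, this.le]
  -- extract endpoints and apply the intermediate value theorem
  obtain ⟨a, hax, ha⟩ := (hsmall.and eventually_mem_nhdsWithin).exists
  have ha0 : 0 < a := mem_Ioi.1 ha
  obtain ⟨b, hbx, hab⟩ := (hlarge.and (eventually_ge_atTop a)).exists
  have hsub : Icc a b ⊆ Ioi 0 := fun t ht => lt_of_lt_of_le ha0 ht.1
  have hx_mem : x ∈ Icc (φ b) (φ a) := ⟨hbx, hax⟩
  obtain ⟨lam, hlam_mem, hlamx⟩ :=
    intermediate_value_Icc' hab (hφcont.mono hsub) hx_mem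
  have hlam : 0 < lam := lt_of_lt_of_le ha0 hlam_mem.1
  -- key data about Ĝ = I (lam * H ·)
  have hlamH : ∀ ω, 0 < lam * H ω := fun ω => mul_pos hlam (hH ω)
  have hUdG : ∀ ω, Ud (I (lam * H ω)) = lam * H ω := fun ω => hI _ (mem_Ioi.2 (hlamH ω))
  have hbudget : (∫ ω, H ω * I (lam * H ω) ∂P) = x := by rw [hφint]; exact hlamx
  have hbudget_sum : ∑ ω, p ω * (H ω * I (lam * H ω)) = x := by
    rw [← isum]; exact hbudget
  -- optimality of Ĝ
  have hopt : ∀ G : Ω → ℝ, (∫ ω, H ω * G ω ∂P) ≤ x →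
      (∫ ω, U (G ω) ∂P) ≤ ∫ ω, U (I (lam * H ω)) ∂P := by
    intro G hG
    rw [isum (fun ω => H ω * G ω)] at hG
    rw [isum (fun ω => U (G ω)), isum (fun ω => U (I (lam * H ω)))]
    have step : ∑ ω, p ω * U (G ω) ≤
        ∑ ω, (p ω * U (I (lam * H ω)) + lam * (p ω * (H ω * G ω))
          - lam * (p ω * (H ω * I (lam * H ω)))) := by
      refine Finset.sum_le_sum fun ω _ => ?_
      have h := hgrad (G ω) (I (lam * H ω))
      rw [hUdG ω] at h
      have h2 := mul_le_mul_of_nonneg_left h (hp ω).le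
      nlinarith [h2]
    have hsplit : ∑ ω, (p ω * U (I (lam * H ω)) + lam * (p ω * (H ω * G ω))
          - lam * (p ω * (H ω * I (lam * H ω))))
        = ∑ ω, p ω * U (I (lam * H ω)) + lam * ∑ ω, p ω * (H ω * G ω)
          - lam * ∑ ω, p ω * (H ω * I (lam * H ω)) := by
      rw [Finset.sum_sub_distrib, Finset.sum_add_distrib, ← Finset.mul_sum, ← Finset.mul_sum]
    rw [hsplit, hbudget_sum] at step
    nlinarith [step, mul_le_mul_of_nonneg_left hG hlam.le]
  -- the primal supremum is attained at Ĝ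
  have hsup : sSup {r : ℝ | ∃ G : Ω → ℝ, (∫ ω, H ω * G ω ∂P) ≤ x ∧ r = ∫ ω, U (G ω) ∂P}
      = ∫ ω, U (I (lam * H ω)) ∂P := by
    apply IsGreatest.csSup_eq
    constructor
    · exact ⟨fun ω => I (lam * H ω), hbudget.le, rfl⟩
    · rintro r ⟨G, hG, rfl⟩
      exact hopt G hG
  -- value of the conjugate
  have hUtilval : ∀ y : ℝ, 0 < y → Util y = U (I y) - I y * y := by
    intro y hy
    rw [hUtil]
    apply IsGreatest.csSup_eq
    constructor
    · exact ⟨I y, rfl⟩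
    · rintro r ⟨z, rfl⟩
      have h := hgrad z (I y)
      rw [hI y (mem_Ioi.2 hy)] at h
      nlinarith [h]
  have hUtilub : ∀ y z : ℝ, 0 < y → U z - z * y ≤ Util y := by
    intro y z hy
    rw [hUtilval y hy]
    have h := hgrad z (I y)
    rw [hI y (mem_Ioi.2 hy)] at h
    nlinarith [h]
  -- duality equality
  have hdual : (∫ ω, U (I (lam * H ω)) ∂P) = (∫ ω, Util (lam * H ω) ∂P) + lam * x := by
    rw [isum (fun ω => U (I (lam * H ω))), isum (fun ω => Util (lam * H ω))]
    have hpt : ∀ ω, p ω * Util (lam * H ω)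
        = p ω * U (I (lam * H ω)) - lam * (p ω * (H ω * I (lam * H ω))) := by
      intro ω
      rw [hUtilval _ (hlamH ω)]
      ring
    have : ∑ ω, p ω * Util (lam * H ω)
        = ∑ ω, p ω * U (I (lam * H ω)) - lam * ∑ ω, p ω * (H ω * I (lam * H ω)) := by
      calc ∑ ω, p ω * Util (lam * H ω)
          = ∑ ω, (p ω * U (I (lam * H ω)) - lam * (p ω * (H ω * I (lam * H ω)))) :=
            Finset.sum_congr rfl fun ω _ => hpt ω
        _ = ∑ ω, p ω * U (I (lam * H ω)) - lam * ∑ ω, p ω * (H ω * I (lam * H ω)) := by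
            rw [Finset.sum_sub_distrib, ← Finset.mul_sum]
    rw [this, hbudget_sum]
    ring
  -- the dual minimality
  have hmin : ∀ lam' : ℝ, 0 < lam' →
      (∫ ω, Util (lam * H ω) ∂P) + lam * x ≤ (∫ ω, Util (lam' * H ω) ∂P) + lam' * x := by
    intro lam' hlam'
    have hstep : ∑ ω, (p ω * U (I (lam * H ω)) - lam' * (p ω * (H ω * I (lam * H ω))))
        ≤ ∑ ω, p ω * Util (lam' * H ω) := by
      refine Finset.sum_le_sum fun ω _ => ?_
      have h := hUtilub (lam' * H ω) (I (lam * H ω)) (mul_pos hlam' (hH ω))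
      have h2 := mul_le_mul_of_nonneg_left h (hp ω).le
      nlinarith [h2]
    have hsplit : ∑ ω, (p ω * U (I (lam * H ω)) - lam' * (p ω * (H ω * I (lam * H ω))))
        = ∑ ω, p ω * U (I (lam * H ω)) - lam' * ∑ ω, p ω * (H ω * I (lam * H ω)) := by
      rw [Finset.sum_sub_distrib, ← Finset.mul_sum]
    rw [hsplit, hbudget_sum] at hstep
    have hUG : (∫ ω, U (I (lam * H ω)) ∂P) = ∑ ω, p ω * U (I (lam * H ω)) :=
      isum (fun ω => U (I (lam * H ω)))
    have hUt' : (∫ ω, Util (lam' * H ω) ∂P) = ∑ ω, p ω * Util (lam' * H ω) :=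
      isum (fun ω => Util (lam' * H ω))
    have hLHS : (∫ ω, Util (lam * H ω) ∂P) + lam * x = ∫ ω, U (I (lam * H ω)) ∂P :=
      hdual.symm
    rw [hLHS, hUG, hUt']
    linarith
  exact ⟨lam, hlam, hbudget, hopt, hsup, hdual, hmin⟩
end

section
/- Let (X, dist) be a compact metric space, w : X → ℝ upper semicontinuous, and Φ : X → [0, ∞) continuous with Z := {x ∈ X : Φ(x) = 0} nonempty. For each n ≥ 1 let x_n ∈ X be a maximizer of w − nΦ over X (such a maximizer exists by upper semicontinuity and compactness). Then: n·Φ(x_n) → 0 as n → ∞; max_X (w − nΦ) → max_Z w as n → ∞; and every cluster point x̂ of the sequence (x_n) satisfies Φ(x̂) = 0 and w(x̂) = max_Z w. -/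
open Set Filter Topology

/-- An upper semicontinuous real function attains its maximum on a nonempty compact set. -/
lemma usc_exists_max {X : Type*} [TopologicalSpace X] {f : X → ℝ}
    (hf : UpperSemicontinuous f) {s : Set X} (hs : IsCompact s) (hne : s.Nonempty) :
    ∃ z ∈ s, ∀ y ∈ s, f y ≤ f z := by
  by_contra h
  push_neg at h
  have hcover : s ⊆ ⋃ y ∈ s, f ⁻¹' Iio (f y) := by
    intro z hz
    obtain ⟨y, hy, hlt⟩ := h z hz
    exact Set.mem_biUnion hy hlt
  obtain ⟨t, hts, htfin, hcov⟩ := hs.elim_finite_subcover_image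
    (fun y _ => hf.isOpen_preimage (f y)) hcover
  have htne : t.Nonempty := by
    obtain ⟨z, hz⟩ := hne
    obtain ⟨y, hy, -⟩ := Set.mem_iUnion₂.1 (hcov hz)
    exact ⟨y, hy⟩
  obtain ⟨y₀, hy₀t, hy₀max⟩ := Set.Finite.exists_maximalFor f t (Set.finite_coe_iff.mp htfin) htne
  have hy₀s : y₀ ∈ s := hts hy₀t
  obtain ⟨y₁, hy₁t, hlt⟩ := Set.mem_iUnion₂.1 (hcov hy₀s)
  exact absurd (hy₀max hy₁t (le_of_lt hlt)) (not_le_of_gt hlt)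

/-- **Penalization lemma for maximum points (doubling-of-variables).**
On a compact metric space, if `x n` maximizes `w − nΦ` (with `w` u.s.c., `Φ ≥ 0` continuous,
`Z = {Φ = 0}` nonempty), then `nΦ(x n) → 0`, `max (w − nΦ) → max_Z w`, and every cluster
point `x̂` of `(x n)` satisfies `Φ(x̂) = 0` and `w(x̂) = max_Z w`. -/
theorem stmt_15
    {X : Type*} [MetricSpace X] [CompactSpace X] [Nonempty X]
    (w : X → ℝ) (hw : UpperSemicontinuous w)
    (Φ : X → ℝ) (hΦc : Continuous Φ) (hΦnonneg : ∀ x, 0 ≤ Φ x)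
    (hZ : {x : X | Φ x = 0}.Nonempty)
    (x : ℕ → X)
    (hx : ∀ n : ℕ, 1 ≤ n → ∀ z : X, w z - n * Φ z ≤ w (x n) - n * Φ (x n)) :
    Tendsto (fun n : ℕ => (n : ℝ) * Φ (x n)) atTop (nhds 0) ∧
    Tendsto (fun n : ℕ => w (x n) - n * Φ (x n)) atTop
      (nhds (sSup (w '' {x : X | Φ x = 0}))) ∧
    ∀ xhat : X, MapClusterPt xhat atTop x →
      Φ xhat = 0 ∧ w xhat = sSup (w '' {x : X | Φ x = 0}) := by
  set Z : Set X := {x : X | Φ x = 0} with hZdef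
  have hZclosed : IsClosed Z := isClosed_eq hΦc continuous_const
  have hZcomp : IsCompact Z := hZclosed.isCompact
  obtain ⟨z₀, hz₀Z, hz₀max⟩ := usc_exists_max hw hZcomp hZ
  have hΦz₀ : Φ z₀ = 0 := hz₀Z
  set M : ℝ := sSup (w '' Z) with hMdef
  have hM : M = w z₀ := by
    apply le_antisymm
    · apply csSup_le (hZ.image w)
      rintro _ ⟨y, hy, rfl⟩
      exact hz₀max y hy
    · exact le_csSup ⟨w z₀, by rintro _ ⟨y, hy, rfl⟩; exact hz₀max y hy⟩ ⟨z₀, hz₀Z, rfl⟩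
  set m : ℕ → ℝ := fun n => w (x n) - n * Φ (x n) with hmdef
  -- m is bounded below by M for n ≥ 1
  have hmge : ∀ n : ℕ, 1 ≤ n → M ≤ m n := by
    intro n hn
    have := hx n hn z₀
    rw [hΦz₀] at this
    simpa [hM, m] using this
  -- shifted sequence is antitone
  have hganti : Antitone (fun k => m (k + 1)) := by
    intro k l hkl
    have h1 : w (x (l + 1)) - ((k : ℝ) + 1) * Φ (x (l + 1)) ≤ m (k + 1) := by
      have := hx (k + 1) (by omega) (x (l + 1))
      push_cast at this
      simpa [m] using this
    have h2 : ((l : ℝ) + 1) * Φ (x (l + 1)) ≥ ((k : ℝ) + 1) * Φ (x (l + 1)) := by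
      apply mul_le_mul_of_nonneg_right _ (hΦnonneg _)
      exact_mod_cast by omega
    have : m (l + 1) ≤ w (x (l + 1)) - (k + 1) * Φ (x (l + 1)) := by
      simp only [m]
      push_cast
      linarith
    exact this.trans h1
  have hbdd : BddBelow (Set.range fun k => m (k + 1)) := by
    refine ⟨M, ?_⟩
    rintro _ ⟨k, rfl⟩
    exact hmge (k + 1) (by omega)
  set L : ℝ := ⨅ k, m (k + 1) with hLdef
  have hgL : Tendsto (fun k => m (k + 1)) atTop (𝓝 L) := tendsto_atTop_ciInf hganti hbdd
  have hmL : Tendsto m atTop (𝓝 L) := (tendsto_add_atTop_iff_nat 1).1 hgL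
  have hML : M ≤ L := le_ciInf fun k => hmge (k + 1) (by omega)
  -- nΦ(x n) → 0
  have hmhalf : Tendsto (fun n => m (n / 2)) atTop (𝓝 L) :=
    hmL.comp (tendsto_atTop_atTop_of_monotone
      (fun a b h => Nat.div_le_div_right h) fun b => ⟨2 * b, by omega⟩)
  have hub : ∀ᶠ n : ℕ in atTop, (n : ℝ) * Φ (x n) ≤ 3 * (m (n / 2) - m n) := by
    filter_upwards [eventually_ge_atTop 2] with n hn
    set k := n / 2 with hk
    set d := n - n / 2 with hd
    have hdn : n ≤ 3 * d := by omega
    have hsum : k + d = n := by omega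
    have hcast : (n : ℝ) = (k : ℝ) + (d : ℝ) := by
      rw [← hsum]; push_cast; ring
    have h1 : w (x n) - (k : ℝ) * Φ (x n) ≤ m k := hx k (by omega) (x n)
    have h2 : (n : ℝ) * Φ (x n)
        = (k : ℝ) * Φ (x n) + (d : ℝ) * Φ (x n) := by rw [hcast]; ring
    have step1 : (d : ℝ) * Φ (x n) ≤ m k - m n := by
      have hmn : m n = w (x n) - (n : ℝ) * Φ (x n) := rfl
      linarith
    have hd3 : (n : ℝ) ≤ 3 * (d : ℝ) := by exact_mod_cast hdn
    have step2 : (n : ℝ) * Φ (x n) ≤ 3 * ((d : ℝ) * Φ (x n)) := by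
      have := mul_le_mul_of_nonneg_right hd3 (hΦnonneg (x n))
      linarith [this]
    linarith
  have hnΦ : Tendsto (fun n : ℕ => (n : ℝ) * Φ (x n)) atTop (𝓝 0) := by
    have hsub : Tendsto (fun n => 3 * (m (n / 2) - m n)) atTop (𝓝 0) := by
      have := (hmhalf.sub hmL).const_mul (3 : ℝ)
      simpa using this
    refine tendsto_of_tendsto_of_tendsto_of_le_of_le' tendsto_const_nhds hsub ?_ hub
    filter_upwards with n
    exact mul_nonneg (Nat.cast_nonneg n) (hΦnonneg _)
  -- Φ(x n) → 0
  have hΦ0 : Tendsto (fun n : ℕ => Φ (x n)) atTop (𝓝 0) := by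
    refine tendsto_of_tendsto_of_tendsto_of_le_of_le' tendsto_const_nhds hnΦ
      (Eventually.of_forall fun n => hΦnonneg _) ?_
    filter_upwards [eventually_ge_atTop 1] with n hn
    calc Φ (x n) = 1 * Φ (x n) := (one_mul _).symm
      _ ≤ (n : ℝ) * Φ (x n) :=
        mul_le_mul_of_nonneg_right (by exact_mod_cast hn) (hΦnonneg _)
  -- w (x n) → L
  have hwL : Tendsto (fun n => w (x n)) atTop (𝓝 L) := by
    have : Tendsto (fun n => m n + (n : ℝ) * Φ (x n)) atTop (𝓝 (L + 0)) := hmL.add hnΦ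
    rw [add_zero] at this
    refine this.congr fun n => by simp [m]
  -- key claim about limits of subsequences
  have key : ∀ a : X, ∀ φ : ℕ → ℕ, StrictMono φ → Tendsto (x ∘ φ) atTop (𝓝 a) →
      Φ a = 0 ∧ L ≤ w a ∧ w a ≤ M := by
    intro a φ hφ hconv
    have hφtop : Tendsto φ atTop atTop := hφ.tendsto_atTop
    have hΦa : Φ a = 0 := by
      have h1 : Tendsto (fun k => Φ (x (φ k))) atTop (𝓝 (Φ a)) :=
        (hΦc.continuousAt.tendsto).comp hconv
      have h2 : Tendsto (fun k => Φ (x (φ k))) atTop (𝓝 0) := hΦ0.comp hφtop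
      exact tendsto_nhds_unique h1 h2
    have haZ : a ∈ Z := hΦa
    have hwM : w a ≤ M := hM ▸ hz₀max a haZ
    have hLa : L ≤ w a := by
      by_contra hc
      push_neg at hc
      set c := (w a + L) / 2 with hcdef
      have hac : w a < c := by simp [hcdef]; linarith
      have hcL : c < L := by simp [hcdef]; linarith
      have h1 : ∀ᶠ k in atTop, w (x (φ k)) < c :=
        hconv.eventually (hw a c hac)
      have h2 : ∀ᶠ k in atTop, c < w (x (φ k)) :=
        (hwL.comp hφtop).eventually (eventually_gt_nhds hcL)
      obtain ⟨k, hk1, hk2⟩ := (h1.and h2).exists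
      exact absurd (hk1.trans hk2) (lt_irrefl _)
    exact ⟨hΦa, hLa, hwM⟩
  -- L = M via an existing cluster point
  obtain ⟨a, φ, hφ, hconv⟩ := CompactSpace.tendsto_subseq x
  obtain ⟨-, hLa, haM⟩ := key a φ hφ hconv
  have hLM : L = M := le_antisymm (hLa.trans haM) hML
  refine ⟨hnΦ, ?_, ?_⟩
  · rw [← hLM]; exact hmL
  · intro xhat hcl
    obtain ⟨ψ, hψ, hψconv⟩ := TopologicalSpace.FirstCountableTopology.tendsto_subseq hcl
    obtain ⟨hΦhat, hLhat, hhatM⟩ := key xhat ψ hψ hψconv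
    exact ⟨hΦhat, le_antisymm hhatM (hLM ▸ hLhat)⟩
end
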